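/- Let L be convex differentiable with ℓ2-path θ(t) := argmin[(e^t−1)L(θ) + ‖θ‖²/2]. Then for any t' ≥ t > 0: ‖θ(t)‖ ≤ (e^t − 1)‖∇L(0)‖ and ‖θ(t)‖ ≤ (1 − e^{−t})(‖∇L(0)‖ + ‖θ(t')‖). -/

import Mathlib

open Real Set Filter Topology

local notation "⟪" x ", " y "⟫" => @inner ℝ _ _ x y

variable {E : Type*} [NormedAddCommGroup E] [InnerProductSpace ℝ E]

lemma combo_norm (a b : E) (μ : ℝ) :
    ‖(1 - μ) • a + μ • b‖ ^ 2
      = (1 - μ) * ‖a‖ ^ 2 + μ * ‖b‖ ^ 2 - μ * (1 - μ) * ‖b - a‖ ^ 2 := by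
  have h : ∀ z : E, ‖z‖ ^ 2 = ⟪z, z⟫ := fun z => (real_inner_self_eq_norm_sq z).symm
  rw [h, h, h, h]
  simp only [inner_add_left, inner_add_right, inner_sub_left, inner_sub_right,
    real_inner_smul_left, real_inner_smul_right]
  ring_nf

lemma strong_min (f : E → ℝ) (c : ℝ) (hc : 0 ≤ c) (hf : ConvexOn ℝ Set.univ f)
    (x : E) (hmin : ∀ y, c * f x + ‖x‖ ^ 2 / 2 ≤ c * f y + ‖y‖ ^ 2 / 2) (y : E) :
    c * f x + ‖x‖ ^ 2 / 2 + ‖y - x‖ ^ 2 / 2 ≤ c * f y + ‖y‖ ^ 2 / 2 := by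
  set A := c * f x + ‖x‖ ^ 2 / 2 with hA
  set B := c * f y + ‖y‖ ^ 2 / 2 with hB
  set C := ‖y - x‖ ^ 2 / 2 with hC
  have key : ∀ μ ∈ Ioc (0:ℝ) 1, A + (1 - μ) * C ≤ B := by
    rintro μ ⟨hμ0, hμ1⟩
    have hz := hmin ((1 - μ) • x + μ • y)
    have hconv := hf.2 (Set.mem_univ x) (Set.mem_univ y) (show (0:ℝ) ≤ 1 - μ by linarith) hμ0.le (show (1 - μ) + μ = 1 by ring)
    have hn := combo_norm x y μ
    rw [smul_eq_mul, smul_eq_mul] at hconv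
    have hmul := mul_le_mul_of_nonneg_left hconv hc
    have h3 : A ≤ (1 - μ) * A + μ * B - μ * (1 - μ) * C := by
      calc A ≤ c * f ((1 - μ) • x + μ • y) + ‖(1 - μ) • x + μ • y‖ ^ 2 / 2 := hz
        _ ≤ c * ((1 - μ) * f x + μ * f y)
            + ((1 - μ) * ‖x‖ ^ 2 + μ * ‖y‖ ^ 2 - μ * (1 - μ) * ‖y - x‖ ^ 2) / 2 := by
          rw [hn]; linarith
        _ = (1 - μ) * A + μ * B - μ * (1 - μ) * C := by rw [hA, hB, hC]; ring
    have h2 : μ * (A + (1 - μ) * C) ≤ μ * B := by nlinarith [h3]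
    exact le_of_mul_le_mul_left h2 hμ0
  have htend : Tendsto (fun μ : ℝ => A + (1 - μ) * C) (𝓝[>] 0) (𝓝 (A + C)) := by
    have : Tendsto (fun μ : ℝ => A + (1 - μ) * C) (𝓝 0) (𝓝 (A + (1 - 0) * C)) := by
      exact (tendsto_const_nhds.add (((tendsto_const_nhds.sub tendsto_id).mul tendsto_const_nhds)))
    simpa using this.mono_left nhdsWithin_le_nhds
  have hev : ∀ᶠ μ in 𝓝[>] (0:ℝ), A + (1 - μ) * C ≤ B :=
    eventually_of_mem (Ioc_mem_nhdsGT_of_mem (by norm_num : (0:ℝ) ∈ Ico (0:ℝ) 1)) key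
  linarith [le_of_tendsto htend hev]

lemma grad_ineq [CompleteSpace E] (L : E → ℝ) (hL : ConvexOn ℝ Set.univ L) (g0 : E)
    (h : HasGradientAt L g0 0) (x : E) : L 0 + ⟪g0, x⟫ ≤ L x := by
  have hφconv : ConvexOn ℝ Set.univ (fun s : ℝ => L (s • x)) := by
    have := hL.comp_affineMap (((LinearMap.id : ℝ →ₗ[ℝ] ℝ).smulRight x).toAffineMap)
    simpa [Function.comp_def] using this
  have hc : HasDerivAt (fun s : ℝ => s • x) x (0:ℝ) := by
    simpa using (hasDerivAt_id (0:ℝ)).smul_const x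
  have hF : HasFDerivAt L ((InnerProductSpace.toDual ℝ E) g0) ((fun s : ℝ => s • x) 0) := by
    simpa using h.hasFDerivAt
  have hder : HasDerivAt (fun s : ℝ => L (s • x)) ⟪g0, x⟫ (0:ℝ) := by
    simpa [Function.comp_def] using hF.comp_hasDerivAt (0:ℝ) hc
  have hs := hφconv.le_slope_of_hasDerivAt (Set.mem_univ (0:ℝ)) (Set.mem_univ (1:ℝ))
    zero_lt_one hder
  simp [slope_def_field] at hs
  linarith [hs]

set_option maxHeartbeats 1000000 in
theorem path_norm_two_bounds {p : ℕ}
    (L : EuclideanSpace ℝ (Fin p) → ℝ) (hL : ConvexOn ℝ Set.univ L)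
    (g : EuclideanSpace ℝ (Fin p) → EuclideanSpace ℝ (Fin p))
    (hgrad : ∀ x, HasGradientAt L (g x) x)
    (θ : ℝ → EuclideanSpace ℝ (Fin p))
    (hθ : ∀ s ≥ 0, ∀ y,
      (Real.exp s - 1) * L (θ s) + ‖θ s‖ ^ 2 / 2 ≤ (Real.exp s - 1) * L y + ‖y‖ ^ 2 / 2)
    (t t' : ℝ) (ht : 0 < t) (htt' : t ≤ t') :
    ‖θ t‖ ≤ (Real.exp t - 1) * ‖g 0‖ ∧
    ‖θ t‖ ≤ (1 - Real.exp (-t)) * (‖g 0‖ + ‖θ t'‖) := by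
  set c : ℝ := Real.exp t - 1 with hcdef
  set c' : ℝ := Real.exp t' - 1 with hc'def
  set x := θ t with hxdef
  set x' := θ t' with hx'def
  have hc : 0 < c := by
    have := Real.exp_lt_exp.2 ht
    simp only [Real.exp_zero] at this
    linarith
  have hcc' : c ≤ c' := by
    have := Real.exp_le_exp.2 htt'
    simp only [hcdef, hc'def]; linarith
  have hc' : 0 < c' := lt_of_lt_of_le hc hcc'
  -- Bound 1
  have hA1 := strong_min L c hc.le hL x (hθ t ht.le) 0
  simp only [zero_sub, norm_neg, norm_zero] at hA1
  have hgi := grad_ineq L hL (g 0) (hgrad 0) x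
  have hcs : -⟪g 0, x⟫ ≤ ‖g 0‖ * ‖x‖ := by
    have := abs_real_inner_le_norm (g 0) x
    have := neg_abs_le (⟪g 0, x⟫)
    linarith
  have hsq : ‖x‖ ^ 2 ≤ c * ‖g 0‖ * ‖x‖ := by
    nlinarith [hA1, mul_le_mul_of_nonneg_left hgi hc.le, mul_le_mul_of_nonneg_left hcs hc.le]
  have hb1 : ‖x‖ ≤ c * ‖g 0‖ := by
    rcases (norm_nonneg x).eq_or_lt with h0 | h0
    · rw [← h0]; positivity
    · exact le_of_mul_le_mul_right (by nlinarith [hsq]) h0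
  refine ⟨hb1, ?_⟩
  -- Monotonicity : ‖x‖ ≤ ‖x'‖
  have hA2 := strong_min L c hc.le hL x (hθ t ht.le) x'
  have hA3 := strong_min L c' hc'.le hL x' (hθ t' (le_trans ht.le htt')) x
  rw [show x - x' = -(x' - x) from (neg_sub x' x).symm, norm_neg] at hA3
  have key : (c' - c) * (‖x‖ ^ 2 - ‖x'‖ ^ 2) + (c + c') * ‖x' - x‖ ^ 2 ≤ 0 := by
    nlinarith [mul_le_mul_of_nonneg_left hA2 hc'.le, mul_le_mul_of_nonneg_left hA3 hc.le]
  have hd : (‖x‖ - ‖x'‖) ^ 2 ≤ ‖x' - x‖ ^ 2 := by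
    have h1 := abs_norm_sub_norm_le x x'
    have h2 : ‖x - x'‖ = ‖x' - x‖ := norm_sub_rev x x'
    calc (‖x‖ - ‖x'‖) ^ 2 = |‖x‖ - ‖x'‖| ^ 2 := (sq_abs _).symm
      _ ≤ ‖x' - x‖ ^ 2 := by
        rw [← h2]; exact pow_le_pow_left₀ (abs_nonneg _) h1 2
  have hmono : ‖x‖ ≤ ‖x'‖ := by
    by_contra hcon
    push_neg at hcon
    have h1 : 0 ≤ c' - c := by linarith
    have h2 : 0 < ‖x‖ - ‖x'‖ := by linarith
    have h3 : 0 ≤ ‖x‖ + ‖x'‖ := by positivity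
    nlinarith [key, mul_le_mul_of_nonneg_left hd (show (0:ℝ) ≤ c + c' by linarith),
      mul_nonneg h1 (mul_nonneg h2.le h3),
      mul_pos (show (0:ℝ) < c + c' by linarith) (pow_pos h2 2)]
  -- Bound 2
  have he0 : 0 < Real.exp (-t) := Real.exp_pos _
  have he1 : Real.exp (-t) < 1 := Real.exp_lt_one_iff.2 (by linarith)
  have hee : Real.exp (-t) * Real.exp t = 1 := by
    rw [← Real.exp_add]; simp
  have hec : Real.exp (-t) * c * ‖g 0‖ = (1 - Real.exp (-t)) * ‖g 0‖ := by
    rw [hcdef, mul_sub, hee, mul_one]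
  linarith [mul_le_mul_of_nonneg_left hb1 he0.le, hec,
    mul_le_mul_of_nonneg_left hmono (show (0:ℝ) ≤ 1 - Real.exp (-t) by linarith)]
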